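/- Let H be a real Hilbert space, let C ⊆ H be nonempty, and let (z^j)_{j≥0} ⊆ H be Fejér monotone with respect to C, i.e. ‖z^{k+1} − z‖ ≤ ‖z^k − z‖ for all z ∈ C and all k. Suppose there are sequences (x^j)_{j≥0}, (y^j)_{j≥0} ⊆ H and positive reals (λ_j)_{j≥0} with z^{k+1} − z^k = λ_k(x^k − y^k) for all k. Let Λ_k := ∑_{i=0}^k λ_i, x̄^k := (1/Λ_k)∑_{i=0}^k λ_i x^i, and ȳ^k := (1/Λ_k)∑_{i=0}^k λ_i y^i. Then for every z ∈ C and every k, ‖x̄^k − ȳ^k‖² ≤ 4‖z^0 − z‖²/Λ_k². -/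

import Mathlib

/-- Theorem 3 (ergodic FPR of Fejér monotone sequences): let `(z^j)` be Fejér monotone with
respect to a nonempty set `C` in a real Hilbert space, and suppose
`z^{k+1} − z^k = λ_k (x^k − y^k)` with `λ_k > 0`. With `Λ_k = ∑_{i=0}^k λ_i`,
`x̄^k = (1/Λ_k) ∑_{i=0}^k λ_i x^i` and `ȳ^k = (1/Λ_k) ∑_{i=0}^k λ_i y^i`, we have
`‖x̄^k − ȳ^k‖² ≤ 4 ‖z^0 − z‖² / Λ_k²` for every `z ∈ C` and every `k`. -/
theorem fejer_monotone_ergodic_fpr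
    {H : Type*} [NormedAddCommGroup H] [InnerProductSpace ℝ H] [CompleteSpace H]
    (C : Set H) (hC : C.Nonempty)
    (z x y : ℕ → H) (lam : ℕ → ℝ) (hlam : ∀ k, 0 < lam k)
    (hfejer : ∀ w ∈ C, ∀ k : ℕ, ‖z (k + 1) - w‖ ≤ ‖z k - w‖)
    (hrec : ∀ k : ℕ, z (k + 1) - z k = lam k • (x k - y k)) :
    ∀ w ∈ C, ∀ k : ℕ,
      ‖(1 / ∑ i ∈ Finset.range (k + 1), lam i) • (∑ i ∈ Finset.range (k + 1), lam i • x i) -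
        (1 / ∑ i ∈ Finset.range (k + 1), lam i) • (∑ i ∈ Finset.range (k + 1), lam i • y i)‖ ^ 2
        ≤ 4 * ‖z 0 - w‖ ^ 2 / (∑ i ∈ Finset.range (k + 1), lam i) ^ 2 := by
  intro w hw k
  set Λ : ℝ := ∑ i ∈ Finset.range (k + 1), lam i with hΛ
  have hΛpos : 0 < Λ := Finset.sum_pos (fun i _ => hlam i) (Finset.nonempty_range_add_one)
  -- telescoping
  have htel : ∑ i ∈ Finset.range (k + 1), lam i • (x i - y i) = z (k + 1) - z 0 := by
    rw [← Finset.sum_range_sub z]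
    exact Finset.sum_congr rfl fun i _ => (hrec i).symm
  have hvec : (1 / Λ) • (∑ i ∈ Finset.range (k + 1), lam i • x i) -
      (1 / Λ) • (∑ i ∈ Finset.range (k + 1), lam i • y i)
      = (1 / Λ) • (z (k + 1) - z 0) := by
    rw [← smul_sub, ← htel, ← Finset.sum_sub_distrib]
    congr 1
    exact Finset.sum_congr rfl fun i _ => (smul_sub (lam i) (x i) (y i)).symm
  -- bound ‖z n - w‖ ≤ ‖z 0 - w‖
  have hmono : ∀ n : ℕ, ‖z n - w‖ ≤ ‖z 0 - w‖ := by
    intro n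
    induction n with
    | zero => exact le_refl _
    | succ n ih => exact le_trans (hfejer w hw n) ih
  have hbound : ‖z (k + 1) - z 0‖ ≤ 2 * ‖z 0 - w‖ := by
    have : z (k + 1) - z 0 = (z (k + 1) - w) - (z 0 - w) := by abel
    rw [this]
    calc ‖(z (k + 1) - w) - (z 0 - w)‖ ≤ ‖z (k + 1) - w‖ + ‖z 0 - w‖ := norm_sub_le _ _
      _ ≤ ‖z 0 - w‖ + ‖z 0 - w‖ := by
          have := hmono (k + 1); linarith
      _ = 2 * ‖z 0 - w‖ := by ring
  rw [hvec, norm_smul]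
  have h1 : ‖(1 : ℝ) / Λ‖ = 1 / Λ := by
    rw [Real.norm_eq_abs, abs_of_pos (by positivity)]
  rw [h1]
  have hsq : (1 / Λ * ‖z (k + 1) - z 0‖) ^ 2 ≤ (1 / Λ * (2 * ‖z 0 - w‖)) ^ 2 := by
    exact pow_le_pow_left₀ (by positivity) (mul_le_mul_of_nonneg_left hbound (by positivity)) 2
  refine hsq.trans (le_of_eq ?_)
  field_simp
  ring
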